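/- There exists a real number x₀ with 1 < x₀ < 2 such that F is strictly decreasing on the interval (1, x₀] and strictly increasing on the interval [x₀, ∞); in particular, F attains its global minimum on (1,∞) at x₀. -/

import Mathlib

open Real Filter Set Topology

/-- `F(x) = Γ(x/2+1) · Γ(x/2−1/2) / Γ(x/2−1/4)²`. -/
noncomputable def F (x : ℝ) : ℝ :=
  Real.Gamma (x / 2 + 1) * Real.Gamma (x / 2 - 1 / 2) / Real.Gamma (x / 2 - 1 / 4) ^ 2

namespace Stmt12

/-- the termwise function in the digamma-type series -/
noncomputable def f (s : ℝ) : ℝ := 2/s - 1/(s+5/4) - 1/(s-1/4)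

/-- `g a = ψ(a+5/4) + ψ(a-1/4) - 2ψ(a)`, as a series -/
noncomputable def g (a : ℝ) : ℝ := ∑' m : ℕ, f (a + m)

noncomputable def S (n : ℕ) (a : ℝ) : ℝ := ∑ m ∈ Finset.range (n+1), f (a + m)

noncomputable def L (n : ℕ) (a : ℝ) : ℝ :=
  Real.BohrMollerup.logGammaSeq (a + 5/4) n + Real.BohrMollerup.logGammaSeq (a + -(1/4)) n
    - 2 * Real.BohrMollerup.logGammaSeq (a + 0) n

noncomputable def G (a : ℝ) : ℝ :=
  Real.log (Real.Gamma (a + 5/4)) + Real.log (Real.Gamma (a + -(1/4)))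
    - 2 * Real.log (Real.Gamma (a + 0))

lemma f_eq {s : ℝ} (h1 : s ≠ 0) (h2 : s + 5/4 ≠ 0) (h3 : s - 1/4 ≠ 0) :
    f s = (s - 5/8) / (s * (s+5/4) * (s-1/4)) := by
  have h4 : s * (s+5/4) * (s-1/4) ≠ 0 := by
    intro hc
    rcases mul_eq_zero.1 hc with hc | hc
    · rcases mul_eq_zero.1 hc with hc | hc
      · exact h1 hc
      · exact h2 hc
    · exact h3 (by linarith [hc])
  unfold f
  rw [div_sub_div _ _ h1 h2, div_sub_div _ _ (mul_ne_zero h1 h2) h3,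
    div_eq_div_iff (mul_ne_zero (mul_ne_zero h1 h2) h3) h4]
  ring

lemma f_pos {s : ℝ} (h : 5/8 < s) : 0 < f s := by
  rw [f_eq (by linarith) (by linarith) (by linarith)]
  apply div_pos (by linarith)
  have hs : (0:ℝ) < s := by linarith
  exact mul_pos (mul_pos hs (by linarith)) (by linarith)

lemma f_nonneg {s : ℝ} (h : 5/8 ≤ s) : 0 ≤ f s := by
  rw [f_eq (by linarith) (by linarith) (by linarith)]
  apply div_nonneg (by linarith)
  have hs : (0:ℝ) < s := by linarith
  exact (mul_pos (mul_pos hs (by linarith)) (by linarith)).le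

lemma f_le {s : ℝ} {m : ℕ} (h : (m:ℝ) + 5/4 ≤ s) : f s ≤ 1/(((m:ℝ)+1)*((m:ℝ)+2)) := by
  have hm : (0:ℝ) ≤ m := Nat.cast_nonneg m
  rw [f_eq (by linarith) (by linarith) (by linarith)]
  have hs : (0:ℝ) < s := by linarith
  have hD : 0 < s * (s+5/4) * (s-1/4) := mul_pos (mul_pos hs (by linarith)) (by linarith)
  rw [div_le_div_iff₀ hD (by positivity)]
  nlinarith [mul_nonneg hm (sub_nonneg.2 h), mul_nonneg (mul_nonneg hm hm) (sub_nonneg.2 h),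
    mul_nonneg (sub_nonneg.2 h) (sub_nonneg.2 h), mul_nonneg (mul_nonneg (sub_nonneg.2 h) (sub_nonneg.2 h)) (sub_nonneg.2 h), mul_nonneg (mul_nonneg hm (sub_nonneg.2 h)) (sub_nonneg.2 h)]

/-- telescoping sum: `∑ 1/((m+1)(m+2)) = 1`. -/
lemma hasSum_u : HasSum (fun m : ℕ => 1/(((m:ℝ)+1)*((m:ℝ)+2))) 1 := by
  have key : ∀ m : ℕ, 1/(((m:ℝ)+1)*((m:ℝ)+2)) = 1/((m:ℝ)+1) - 1/((m:ℝ)+2) := by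
    intro m
    have h1 : ((m:ℝ)+1) ≠ 0 := by positivity
    have h2 : ((m:ℝ)+2) ≠ 0 := by positivity
    field_simp
    ring
  simp_rw [key]
  have : Tendsto (fun n : ℕ => 1 - 1/((n:ℝ)+1)) atTop (𝓝 1) := by
    have := tendsto_one_div_add_atTop_nhds_zero_nat (𝕜 := ℝ)
    simpa using (tendsto_const_nhds (x := (1:ℝ))).sub this
  have heq : ∀ n : ℕ, ∑ m ∈ Finset.range n, (1/((m:ℝ)+1) - 1/((m:ℝ)+2)) = 1 - 1/((n:ℝ)+1) := by
    intro n
    induction n with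
    | zero => simp
    | succ k ih =>
      rw [Finset.sum_range_succ, ih]; push_cast; field_simp; ring
  rw [hasSum_iff_tendsto_nat_of_nonneg]
  · simpa only [heq] using this
  · intro m
    rw [← key m]
    positivity

lemma summable_u : Summable (fun m : ℕ => 1/(((m:ℝ)+1)*((m:ℝ)+2))) := hasSum_u.summable

/-- telescoping: `∑ 5/((m+1)(m+2)(m+3)) = 5/4`. -/
lemma hasSum_w : HasSum (fun m : ℕ => 5/(((m:ℝ)+1)*((m:ℝ)+2)*((m:ℝ)+3))) (5/4) := by
  have key : ∀ m : ℕ, 5/(((m:ℝ)+1)*((m:ℝ)+2)*((m:ℝ)+3))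
      = (5/2)*(1/(((m:ℝ)+1)*((m:ℝ)+2))) - (5/2)*(1/(((m:ℝ)+2)*((m:ℝ)+3))) := by
    intro m
    have h1 : ((m:ℝ)+1) ≠ 0 := by positivity
    have h2 : ((m:ℝ)+2) ≠ 0 := by positivity
    have h3 : ((m:ℝ)+3) ≠ 0 := by positivity
    field_simp
    ring
  simp_rw [key]
  have heq : ∀ n : ℕ, ∑ m ∈ Finset.range n,
      ((5/2)*(1/(((m:ℝ)+1)*((m:ℝ)+2))) - (5/2)*(1/(((m:ℝ)+2)*((m:ℝ)+3))))
      = 5/4 - (5/2)*(1/(((n:ℝ)+1)*((n:ℝ)+2))) := by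
    intro n
    induction n with
    | zero => norm_num
    | succ k ih =>
      rw [Finset.sum_range_succ, ih]; push_cast
      have h1 : ((k:ℝ)+1) ≠ 0 := by positivity
      have h2 : ((k:ℝ)+2) ≠ 0 := by positivity
      have h3 : ((k:ℝ)+3) ≠ 0 := by positivity
      field_simp
      ring
  have hlim : Tendsto (fun n : ℕ => 5/4 - (5/2)*(1/(((n:ℝ)+1)*((n:ℝ)+2)))) atTop (𝓝 (5/4)) := by
    have h0 : Tendsto (fun n : ℕ => 1/(((n:ℝ)+1)*((n:ℝ)+2))) atTop (𝓝 0) := by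
      apply squeeze_zero (fun n => by positivity) (g := fun n : ℕ => 1/((n:ℝ)+1))
      · intro n
        apply div_le_div_of_nonneg_left (by norm_num) (by positivity)
        nlinarith [Nat.cast_nonneg (α := ℝ) n]
      · exact tendsto_one_div_add_atTop_nhds_zero_nat
    simpa using (tendsto_const_nhds (x := (5/4:ℝ))).sub ((h0.const_mul (5/2)))
  rw [hasSum_iff_tendsto_nat_of_nonneg]
  · simpa only [heq] using hlim
  · intro m
    rw [← key m]
    positivity


lemma summable_tail {a : ℝ} (ha : 1/4 < a) : Summable (fun m : ℕ => f (a + 1 + m)) := by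
  apply Summable.of_nonneg_of_le (fun m => ?_) (fun m => ?_) summable_u
  · have hm : (0:ℝ) ≤ m := Nat.cast_nonneg m
    exact (f_pos (by linarith)).le
  · exact f_le (by linarith)

lemma summable_f {a : ℝ} (ha : 1/4 < a) : Summable (fun m : ℕ => f (a + m)) := by
  have h := summable_tail ha
  have h2 : (fun m : ℕ => f (a + 1 + m)) = (fun m : ℕ => f (a + ↑(m+1))) := by
    funext m; congr 1; push_cast; ring
  rw [h2] at h
  exact (summable_nat_add_iff 1).mp h

lemma g_split {a : ℝ} (ha : 1/4 < a) : g a = f a + ∑' m : ℕ, f (a + 1 + m) := by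
  rw [g, Summable.tsum_eq_zero_add (summable_f ha)]
  congr 1
  · norm_num
  · apply tsum_congr; intro m; congr 1; push_cast; ring

lemma tuo {b : ℝ} (hb : 1/4 < b) : TendstoUniformlyOn S g atTop (Ioi b) := by
  set C : ℝ := 2/b + 1/(b+5/4) + 1/(b-1/4) with hC
  set u : ℕ → ℝ := fun m => if m = 0 then C else 1/((m:ℝ)*((m:ℝ)+1)) with hu
  have hu_sum : Summable u := by
    apply (summable_nat_add_iff 1).mp
    have : (fun m : ℕ => u (m+1)) = fun m : ℕ => 1/(((m:ℝ)+1)*((m:ℝ)+2)) := by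
      funext m; simp only [hu, Nat.add_eq_zero, and_false, if_false, if_neg (Nat.succ_ne_zero m)]
      push_cast; ring_nf
    rw [this]; exact summable_u
  have hbound : ∀ m : ℕ, ∀ x ∈ Ioi b, ‖f (x + m)‖ ≤ u m := by
    intro m x hx
    simp only [mem_Ioi] at hx
    match m with
    | 0 =>
      simp only [hu, if_pos rfl, Nat.cast_zero, add_zero]
      have hb0 : 0 < b := by linarith
      have hx0 : 0 < x := by linarith
      have e1 : 2/x ≤ 2/b := div_le_div_of_nonneg_left (by norm_num) hb0 hx.le
      have e2 : 1/(x+5/4) ≤ 1/(b+5/4) := div_le_div_of_nonneg_left (by norm_num) (by linarith) (by linarith)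
      have e3 : 1/(x-1/4) ≤ 1/(b-1/4) := div_le_div_of_nonneg_left (by norm_num) (by linarith) (by linarith)
      have p1 : 0 < 2/x := div_pos (by norm_num) hx0
      have p2 : 0 < 1/(x+5/4) := div_pos (by norm_num) (by linarith)
      have p3 : 0 < 1/(x-1/4) := div_pos (by norm_num) (by linarith)
      have p1' : 0 < 2/b := div_pos (by norm_num) hb0
      have p2' : 0 < 1/(b+5/4) := div_pos (by norm_num) (by linarith)
      have p3' : 0 < 1/(b-1/4) := div_pos (by norm_num) (by linarith)
      rw [Real.norm_eq_abs, abs_le]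
      constructor <;> unfold f <;> linarith
    | Nat.succ k =>
      have hm : (0:ℝ) ≤ k := Nat.cast_nonneg k
      have harg : (k:ℝ) + 5/4 ≤ x + ↑(k+1) := by push_cast; linarith
      have h1 := f_le harg
      have h2 : 0 < f (x + ↑(k+1)) := f_pos (by push_cast; linarith)
      rw [Real.norm_eq_abs, abs_of_pos h2]
      simp only [hu, if_neg (Nat.succ_ne_zero k)]
      push_cast
      calc f (x + (↑k+1)) ≤ 1/((↑k+1)*(↑k+2)) := by push_cast at h1 ⊢; linarith
        _ ≤ 1/((↑k+1)*(↑k+1+1)) := le_of_eq (by ring_nf)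
  have base := tendstoUniformlyOn_tsum_nat hu_sum hbound
  intro v hv
  exact (tendsto_add_atTop_nat 1).eventually (base v hv)

lemma tlu : TendstoLocallyUniformlyOn S g atTop (Ioi (1/4 : ℝ)) := by
  intro v hv x hx
  simp only [mem_Ioi] at hx
  refine ⟨Ioi ((1/4 + x)/2), mem_nhdsWithin_of_mem_nhds (Ioi_mem_nhds (by linarith)), ?_⟩
  exact tuo (by linarith) v hv

lemma hasDerivAt_lgs (c : ℝ) (n : ℕ) {a : ℝ} (h : 0 < a + c) :
    HasDerivAt (fun a : ℝ => Real.BohrMollerup.logGammaSeq (a + c) n)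
      (Real.log n - ∑ m ∈ Finset.range (n+1), 1/(a + c + m)) a := by
  have hterm : ∀ m ∈ Finset.range (n+1),
      HasDerivAt (fun a : ℝ => Real.log (a + c + m)) (1/(a + c + m)) a := by
    intro m _
    have hm : (0:ℝ) ≤ m := Nat.cast_nonneg m
    have hne : a + c + m ≠ 0 := by linarith
    have h1 : HasDerivAt (fun a : ℝ => a + c + m) 1 a := by
      simpa using ((hasDerivAt_id a).add_const c).add_const (m:ℝ)
    have := (Real.hasDerivAt_log hne).comp a h1
    simpa [one_div, Function.comp_def] using this
  have hsum := HasDerivAt.fun_sum hterm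
  have h1 : HasDerivAt (fun a : ℝ => (a + c) * Real.log n) (Real.log n) a := by
    simpa using ((hasDerivAt_id a).add_const c).mul_const (Real.log n)
  have h2 := (h1.add_const (Real.log (Nat.factorial n : ℝ))).sub hsum
  have hfun : (fun a : ℝ => (a + c) * Real.log n + Real.log (Nat.factorial n : ℝ)
      - ∑ m ∈ Finset.range (n+1), Real.log (a + c + m))
      = (fun a : ℝ => Real.BohrMollerup.logGammaSeq (a + c) n) := by
    funext y
    rw [Real.BohrMollerup.logGammaSeq]
  rw [← hfun]
  exact h2

lemma hasDerivAt_L (n : ℕ) {a : ℝ} (ha : 1/4 < a) : HasDerivAt (L n) (S n a) a := by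
  have h1 := hasDerivAt_lgs (5/4) n (a := a) (by linarith)
  have h2 := hasDerivAt_lgs (-(1/4)) n (a := a) (by linarith)
  have h3 := hasDerivAt_lgs 0 n (a := a) (by linarith)
  have h := (h1.add h2).sub (h3.const_mul 2)
  have hval : (Real.log n - ∑ m ∈ Finset.range (n+1), 1/(a + 5/4 + m))
      + (Real.log n - ∑ m ∈ Finset.range (n+1), 1/(a + -(1/4) + m))
      - 2 * (Real.log n - ∑ m ∈ Finset.range (n+1), 1/(a + 0 + m)) = S n a := by
    have hterm : ∀ m ∈ Finset.range (n+1), f (a + m)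
        = 2*(1/(a + 0 + m)) - 1/(a + 5/4 + m) - 1/(a + -(1/4) + m) := by
      intro m _
      have e1 : a + (m:ℝ) + 5/4 = a + 5/4 + m := by ring
      have e2 : a + (m:ℝ) - 1/4 = a + -(1/4) + m := by ring
      have e3 : a + (m:ℝ) = a + 0 + m := by ring
      unfold f
      rw [e1, e2, e3]
      ring
    rw [S, Finset.sum_congr rfl hterm, Finset.sum_sub_distrib, Finset.sum_sub_distrib,
      ← Finset.mul_sum]
    ring
  rw [← hval]
  exact h

lemma tendsto_L {a : ℝ} (ha : 1/4 < a) : Tendsto (fun n => L n a) atTop (𝓝 (G a)) := by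
  have h1 := Real.BohrMollerup.tendsto_log_gamma (x := a + 5/4) (by linarith)
  have h2 := Real.BohrMollerup.tendsto_log_gamma (x := a + -(1/4)) (by linarith)
  have h3 := Real.BohrMollerup.tendsto_log_gamma (x := a + 0) (by linarith)
  exact (h1.add h2).sub (h3.const_mul 2)

lemma hasDerivAt_G {a : ℝ} (ha : 1/4 < a) : HasDerivAt G (g a) a :=
  hasDerivAt_of_tendstoLocallyUniformlyOn isOpen_Ioi tlu
    (Filter.Eventually.of_forall fun n x hx => hasDerivAt_L n hx)
    (fun _ hx => tendsto_L hx) ha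

lemma f_contAt {s : ℝ} (h1 : s ≠ 0) (h2 : s + 5/4 ≠ 0) (h3 : s - 1/4 ≠ 0) :
    ContinuousAt f s := by
  unfold f
  exact ((continuousAt_const.div continuousAt_id h1).sub
    (continuousAt_const.div (continuousAt_id.add continuousAt_const) h2)).sub
    (continuousAt_const.div (continuousAt_id.sub continuousAt_const) h3)

lemma continuousOn_g : ContinuousOn g (Ioi (1/4 : ℝ)) := by
  apply tlu.continuousOn (Filter.Frequently.of_forall fun n => ?_)
  apply continuousOn_finset_sum
  intro m _
  intro x hx
  simp only [mem_Ioi] at hx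
  have hm : (0:ℝ) ≤ m := Nat.cast_nonneg m
  have hc : ContinuousAt (fun a : ℝ => f (a + m)) x :=
    (f_contAt (by linarith) (by linarith) (by linarith)).comp
      ((continuous_id.add continuous_const).continuousAt)
  exact hc.continuousWithinAt


lemma g_pos {a : ℝ} (ha : 5/8 ≤ a) : 0 < g a := by
  have hsum := summable_f (show 1/4 < a by linarith)
  refine Summable.tsum_pos hsum (fun m => ?_) 1 ?_
  · have hm : (0:ℝ) ≤ m := Nat.cast_nonneg m
    exact f_nonneg (by linarith)
  · exact f_pos (by push_cast; linarith)

lemma g_neg : g (13/50) < 0 := by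
  rw [g_split (by norm_num)]
  have htail : ∑' m : ℕ, f (13/50 + 1 + m) ≤ 1 := by
    have h := Summable.tsum_le_tsum (f := fun m : ℕ => f (13/50 + 1 + m))
      (g := fun m : ℕ => 1/(((m:ℝ)+1)*((m:ℝ)+2)))
      (fun m => f_le (by linarith [Nat.cast_nonneg (α := ℝ) m]))
      (summable_tail (by norm_num)) summable_u
    rw [hasSum_u.tsum_eq] at h
    exact h
  have hf0 : f (13/50) < -2 := by unfold f; norm_num
  linarith

lemma base_ineq {x y : ℝ} (hx : 0 < x) (hx' : x ≤ 3/8) (hy : 0 < y) (hy' : y ≤ 3/8) :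
    (3/2) * (x*y*((x+1/4)*(y+1/4))) ≤ (x+1/4)*(y+1/4) - 2*(x*y) := by
  nlinarith [sq_nonneg (x-y), sq_nonneg (x+y), mul_pos hx hy,
    mul_nonneg (sub_nonneg.2 hx') (sub_nonneg.2 hy'),
    mul_nonneg (mul_nonneg (sub_nonneg.2 hx') (sub_nonneg.2 hy')) (mul_pos hx hy).le,
    mul_nonneg (mul_nonneg hx.le hy.le) (sq_nonneg (x-y)),
    mul_nonneg (mul_nonneg hx.le hy.le) (sq_nonneg (x+y-3/4)),
    mul_nonneg (mul_nonneg (sub_nonneg.2 hx') hy.le) (sq_nonneg (x-y)),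
    sq_nonneg (x*y), sq_nonneg (x+y-3/4)]

lemma f_gap {a₁ a₂ : ℝ} (h1 : 1/4 < a₁) (h12 : a₁ ≤ a₂) (h2 : a₂ ≤ 5/8) :
    (3/2)*(a₂ - a₁) ≤ f a₂ - f a₁ := by
  have p1 : (0:ℝ) < a₁ := by linarith
  have p2 : (0:ℝ) < a₂ := by linarith
  have q1 : (0:ℝ) < a₁ - 1/4 := by linarith
  have q2 : (0:ℝ) < a₂ - 1/4 := by linarith
  have r1 : (0:ℝ) < a₁ + 5/4 := by linarith
  have r2 : (0:ℝ) < a₂ + 5/4 := by linarith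
  have hD1 : 0 < a₁ * (a₁+5/4) * (a₁-1/4) := mul_pos (mul_pos p1 r1) q1
  have hD2 : 0 < a₂ * (a₂+5/4) * (a₂-1/4) := mul_pos (mul_pos p2 r2) q2
  rw [f_eq p2.ne' r2.ne' q2.ne', f_eq p1.ne' r1.ne' q1.ne',
    div_sub_div _ _ hD2.ne' hD1.ne', le_div_iff₀ (mul_pos hD2 hD1)]
  have base := base_ineq (x := a₁ - 1/4) (y := a₂ - 1/4) q1 (by linarith) q2 (by linarith)
  have hb2 := mul_le_mul_of_nonneg_left base
    (mul_nonneg (sub_nonneg.2 h12) (mul_pos r1 r2).le)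
  nlinarith [hb2, mul_nonneg (mul_nonneg (sub_nonneg.2 h12) (mul_pos q1 q2).le) (mul_pos p1 p2).le]

lemma poly_M {M : ℝ} (hM : 1 ≤ M) :
    ((5/2)*M + 25/8) * (M*(M+1)*(M+2)) ≤ 5 * ((M+1/4)^2*(M+3/2)^2) := by
  nlinarith [sq_nonneg M, pow_le_pow_left₀ (by norm_num : (0:ℝ) ≤ 1) hM 4]

lemma tail_core {M s₁ s₂ : ℝ} (hM1 : 1 ≤ M)
    (hs₁ : M + 1/4 < s₁) (hs₂l : M + 1/4 < s₂)
    (hs₁u : s₁ ≤ M + 5/8) (hs₂u : s₂ ≤ M + 5/8) (hs12 : s₁ ≤ s₂) :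
    -(s₂ - s₁) * (5/(M*(M+1)*(M+2))) ≤ f s₂ - f s₁ := by
  have p1 : (0:ℝ) < s₁ := by linarith
  have p2 : (0:ℝ) < s₂ := by linarith
  have q1 : (0:ℝ) < s₁ - 1/4 := by linarith
  have q2 : (0:ℝ) < s₂ - 1/4 := by linarith
  have r1 : (0:ℝ) < s₁ + 5/4 := by linarith
  have r2 : (0:ℝ) < s₂ + 5/4 := by linarith
  have hD1 : 0 < s₁ * (s₁+5/4) * (s₁-1/4) := mul_pos (mul_pos p1 r1) q1
  have hD2 : 0 < s₂ * (s₂+5/4) * (s₂-1/4) := mul_pos (mul_pos p2 r2) q2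
  have hM0 : (0:ℝ) < M := by linarith
  have hMpos : 0 < M*(M+1)*(M+2) := mul_pos (mul_pos hM0 (by linarith)) (by linarith)
  rw [f_eq p2.ne' r2.ne' q2.ne', f_eq p1.ne' r1.ne' q1.ne',
    div_sub_div _ _ hD2.ne' hD1.ne', le_div_iff₀ (mul_pos hD2 hD1)]
  have key1 : -(s₂-s₁) * (((5/4)*(s₁+s₂)+25/16) * ((s₁-1/4)*(s₂-1/4)))
      ≤ (s₂-5/8) * (s₁*(s₁+5/4)*(s₁-1/4)) - (s₂*(s₂+5/4)*(s₂-1/4))*(s₁-5/8) := by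
    linarith [mul_nonneg (mul_nonneg (sub_nonneg.2 hs12)
        (show (0:ℝ) ≤ s₁*s₂ - (s₁-1/4)*(s₂-1/4) by nlinarith))
        (mul_pos r1 r2).le]
  have hw : (0:ℝ) < 5/(M*(M+1)*(M+2)) := by positivity
  have e1 : (M+1/4)*(M+1/4) ≤ s₁*s₂ :=
    mul_le_mul hs₁.le hs₂l.le (by linarith) p1.le
  have e2 : (M+3/2)*(M+3/2) ≤ (s₁+5/4)*(s₂+5/4) :=
    mul_le_mul (by linarith) (by linarith) (by linarith) r1.le
  have e3 : (M+1/4)^2*(M+3/2)^2 ≤ s₁*s₂*((s₁+5/4)*(s₂+5/4)) := by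
    have h := mul_le_mul e1 e2 (mul_self_nonneg _) (mul_nonneg p1.le p2.le)
    calc (M+1/4)^2*(M+3/2)^2 = (M+1/4)*(M+1/4)*((M+3/2)*(M+3/2)) := by ring
      _ ≤ _ := h
  have hchain : (5/4)*(s₁+s₂)+25/16 ≤ (5/(M*(M+1)*(M+2))) * (s₁*s₂*((s₁+5/4)*(s₂+5/4))) := by
    have step1 : (5/4)*(s₁+s₂)+25/16 ≤ (5/2)*M + 25/8 := by linarith
    have step2 : (5/2)*M + 25/8 ≤ (5/(M*(M+1)*(M+2))) * ((M+1/4)^2*(M+3/2)^2) := by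
      have e : (5/(M*(M+1)*(M+2))) * ((M+1/4)^2*(M+3/2)^2)
          = 5 * ((M+1/4)^2*(M+3/2)^2) / (M*(M+1)*(M+2)) := by ring
      rw [e, le_div_iff₀ hMpos]
      linarith [poly_M hM1]
    have step3 := mul_le_mul_of_nonneg_left e3 hw.le
    linarith
  have hq12 : (0:ℝ) ≤ (s₁-1/4)*(s₂-1/4) := (mul_pos q1 q2).le
  have hδ : (0:ℝ) ≤ s₂ - s₁ := sub_nonneg.2 hs12
  have hfin := mul_le_mul_of_nonneg_right hchain hq12
  linarith [key1, mul_le_mul_of_nonneg_left hfin hδ]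

lemma f_tail_gap {a₁ a₂ : ℝ} (m : ℕ) (h1 : 1/4 < a₁) (h12 : a₁ ≤ a₂) (h2 : a₂ ≤ 5/8) :
    -(a₂ - a₁) * (5/(((m:ℝ)+1)*((m:ℝ)+2)*((m:ℝ)+3))) ≤ f (a₂+1+m) - f (a₁+1+m) := by
  have hm : (0:ℝ) ≤ m := Nat.cast_nonneg m
  have h := tail_core (M := (m:ℝ)+1) (s₁ := a₁+1+(m:ℝ)) (s₂ := a₂+1+(m:ℝ))
    (by linarith) (by linarith) (by linarith) (by linarith) (by linarith) (by linarith)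
  have e : ((m:ℝ)+1)*(((m:ℝ)+1)+1)*(((m:ℝ)+1)+2) = ((m:ℝ)+1)*((m:ℝ)+2)*((m:ℝ)+3) := by ring
  rw [e] at h
  have e2 : a₂+1+(m:ℝ) - (a₁+1+(m:ℝ)) = a₂ - a₁ := by ring
  rw [e2] at h
  exact h

lemma g_mono {a₁ a₂ : ℝ} (h1 : 1/4 < a₁) (h12 : a₁ < a₂) (h2 : a₂ ≤ 5/8) : g a₁ < g a₂ := by
  have h1' : 1/4 < a₂ := by linarith
  rw [g_split h1, g_split h1']
  have hsub := Summable.tsum_sub (summable_tail h1') (summable_tail h1)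
  have hT : -(a₂-a₁) * (5/4) ≤ ∑' m : ℕ, (f (a₂+1+m) - f (a₁+1+m)) := by
    have hs1 : Summable (fun m : ℕ => -(a₂-a₁) * (5/(((m:ℝ)+1)*((m:ℝ)+2)*((m:ℝ)+3)))) :=
      hasSum_w.summable.mul_left _
    have hle := Summable.tsum_le_tsum (fun m => f_tail_gap m h1 h12.le h2) hs1
      ((summable_tail h1').sub (summable_tail h1))
    calc -(a₂-a₁) * (5/4)
        = ∑' m : ℕ, -(a₂-a₁) * (5/(((m:ℝ)+1)*((m:ℝ)+2)*((m:ℝ)+3))) := by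
          rw [tsum_mul_left, hasSum_w.tsum_eq]
      _ ≤ _ := hle
  rw [hsub] at hT
  have h0 := f_gap h1 h12.le h2
  linarith

lemma exists_root : ∃ a₀ : ℝ, a₀ ∈ Ioo (13/50 : ℝ) (5/8 : ℝ) ∧ g a₀ = 0 := by
  have hcont : ContinuousOn g (Icc (13/50 : ℝ) (5/8)) :=
    continuousOn_g.mono (fun x hx => by
      simp only [mem_Icc] at hx
      simp only [mem_Ioi]
      linarith [hx.1])
  have hIVT := intermediate_value_Ioo (by norm_num : (13/50:ℝ) ≤ 5/8) hcont
  have h0 : (0:ℝ) ∈ Ioo (g (13/50)) (g (5/8)) := ⟨g_neg, g_pos (le_refl _)⟩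
  obtain ⟨a₀, ha₀, hga₀⟩ := hIVT h0
  exact ⟨a₀, ha₀, hga₀⟩

lemma F_eq {x : ℝ} (hx : 1 < x) : F x = Real.exp (G (x/2 - 1/4)) := by
  have h1 : 0 < Real.Gamma (x/2 - 1/4 + 5/4) := Real.Gamma_pos_of_pos (by linarith)
  have h2 : 0 < Real.Gamma (x/2 - 1/4 + -(1/4)) := Real.Gamma_pos_of_pos (by linarith)
  have h3 : 0 < Real.Gamma (x/2 - 1/4 + 0) := Real.Gamma_pos_of_pos (by linarith)
  rw [G, Real.exp_sub, Real.exp_add, Real.exp_log h1, Real.exp_log h2,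
    show (2:ℝ) * Real.log (Real.Gamma (x/2-1/4+0)) = Real.log (Real.Gamma (x/2-1/4+0)^2) by
      rw [Real.log_pow]; norm_num,
    Real.exp_log (by positivity)]
  unfold F
  rw [show x/2-1/4+5/4 = x/2+1 by ring, show x/2-1/4+ -(1/4) = x/2-1/2 by ring,
    show x/2-1/4+0 = x/2-1/4 by ring]

lemma hasDerivAt_F {x : ℝ} (hx : 1 < x) :
    HasDerivAt F (Real.exp (G (x/2-1/4)) * (g (x/2-1/4) * (1/2))) x := by
  have ha : (1/4:ℝ) < x/2 - 1/4 := by linarith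
  have hinner : HasDerivAt (fun y : ℝ => y/2 - 1/4) (1/2) x := by
    simpa using ((hasDerivAt_id x).div_const 2).sub_const (1/4)
  have hG := (hasDerivAt_G ha).comp x hinner
  have hE := hG.exp
  apply hE.congr_of_eventuallyEq
  filter_upwards [Ioi_mem_nhds hx] with y hy
  exact F_eq hy

end Stmt12

theorem stmt12 :
    ∃ x₀ : ℝ, 1 < x₀ ∧ x₀ < 2 ∧
      StrictAntiOn F (Set.Ioc 1 x₀) ∧ StrictMonoOn F (Set.Ici x₀) ∧
      ∀ x : ℝ, 1 < x → F x₀ ≤ F x := by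
  obtain ⟨a₀, ⟨ha₀l, ha₀r⟩, hga₀⟩ := Stmt12.exists_root
  set x₀ : ℝ := 2*a₀ + 1/2 with hx₀
  have hx₀1 : 1 < x₀ := by rw [hx₀]; linarith
  have hx₀2 : x₀ < 2 := by rw [hx₀]; linarith
  have hderiv : ∀ y : ℝ, 1 < y → deriv F y
      = Real.exp (Stmt12.G (y/2-1/4)) * (Stmt12.g (y/2-1/4) * (1/2)) :=
    fun y hy => (Stmt12.hasDerivAt_F hy).deriv
  have hcont : ∀ s : Set ℝ, s ⊆ Ioi 1 → ContinuousOn F s := fun s hs y hy =>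
    ((Stmt12.hasDerivAt_F (hs hy)).continuousAt).continuousWithinAt
  have hneg : ∀ y ∈ Ioo (1:ℝ) x₀, deriv F y < 0 := by
    intro y hy
    obtain ⟨hy1, hy2⟩ := hy
    rw [hderiv y hy1]
    have hga : Stmt12.g (y/2-1/4) < 0 := by
      have := Stmt12.g_mono (a₁ := y/2-1/4) (a₂ := a₀) (by linarith)
        (by rw [hx₀] at hy2; linarith) (by linarith)
      linarith [this, hga₀.ge.trans_eq rfl]
    have := Real.exp_pos (Stmt12.G (y/2-1/4))
    nlinarith
  have hpos : ∀ y : ℝ, x₀ < y → 0 < deriv F y := by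
    intro y hy
    have hy1 : 1 < y := by linarith
    rw [hderiv y hy1]
    have hga : 0 < Stmt12.g (y/2-1/4) := by
      rcases le_or_gt (y/2-1/4) (5/8) with h | h
      · have := Stmt12.g_mono (a₁ := a₀) (a₂ := y/2-1/4) (by linarith)
          (by rw [hx₀] at hy; linarith) h
        linarith [hga₀.le.trans_eq rfl]
      · exact Stmt12.g_pos h.le
    have := Real.exp_pos (Stmt12.G (y/2-1/4))
    nlinarith
  have hanti : StrictAntiOn F (Set.Ioc 1 x₀) := by
    apply strictAntiOn_of_deriv_neg (convex_Ioc 1 x₀)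
      (hcont _ (fun y hy => hy.1))
    intro y hy
    rw [interior_Ioc] at hy
    exact hneg y hy
  have hmono : StrictMonoOn F (Set.Ici x₀) := by
    apply strictMonoOn_of_deriv_pos (convex_Ici x₀)
      (hcont _ (fun y hy => lt_of_lt_of_le hx₀1 hy))
    intro y hy
    rw [interior_Ici] at hy
    exact hpos y hy
  refine ⟨x₀, hx₀1, hx₀2, hanti, hmono, ?_⟩
  intro x hx
  rcases le_or_gt x x₀ with h | h
  · rcases eq_or_lt_of_le h with rfl | hlt
    · exact le_refl _
    · exact (hanti ⟨hx, h⟩ ⟨hx₀1, le_refl _⟩ hlt).le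
  · exact (hmono self_mem_Ici (mem_Ici.2 h.le) h).le
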